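/- Let a, b ∈ ℝ. Then the conditions a ≤ 0, b ≤ 0 and a·b = 0 hold simultaneously if and only if for every γ > 0 one has a = -(1/γ)·max(0, b - γ·a). -/

import Mathlib

/-- Parameter-free formulation: the complementarity conditions `a ≤ 0`, `b ≤ 0`, `a·b = 0`
hold iff the penalized equation `a = -(1/γ)·max 0 (b - γ·a)` holds for every `γ > 0`. -/
theorem complementarity_iff_forall_penalized (a b : ℝ) :
    (a ≤ 0 ∧ b ≤ 0 ∧ a * b = 0) ↔
      ∀ γ : ℝ, 0 < γ → a = -(1 / γ) * max 0 (b - γ * a) := by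
  constructor
  · rintro ⟨ha, hb, hab⟩ γ hγ
    rcases mul_eq_zero.mp hab with h | h
    · subst h
      rw [max_eq_left (by linarith)]; ring
    · subst h
      rw [max_eq_right (by nlinarith)]
      field_simp
      ring
  · intro h
    have h1 := h 1 one_pos
    simp only [one_mul] at h1
    rcases le_or_gt (b - a) 0 with hc | hc
    · rw [max_eq_left hc] at h1
      simp at h1
      subst h1
      exact ⟨le_refl 0, by linarith, by ring⟩
    · rw [max_eq_right hc.le] at h1
      have hb0 : b = 0 := by linarith
      subst hb0
      have ha : a ≤ 0 := by nlinarith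
      exact ⟨ha, le_refl 0, by ring⟩
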